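/- There exists a 4-simplex in Euclidean 4-space whose centroid coincides with its circumcenter but whose incenter is distinct from both, and there exists a 4-simplex whose incenter coincides with its centroid but whose circumcenter is distinct from both. Consequently, for 4-simplices the coincidence of centroid and circumcenter implies neither of the coincidences circumcenter = incenter or incenter = centroid, and the coincidence of incenter and centroid implies neither of the other two coincidences. -/

import Mathlib

/-
Common geometric notions for simplices in Euclidean d-space, following
Edmonds–Hajja–Martini, "Coincidences of simplex centers and related facial
structures".  A d-simplex is given by its d+1 affinely independent vertices
`A : Fin (d+1) → EuclideanSpace ℝ (Fin d)`.
-/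

noncomputable section

abbrev Pt (d : ℕ) : Type := EuclideanSpace ℝ (Fin d)

variable {d : ℕ}

/-- The centroid of the simplex with vertices `A`: the average of the vertices. -/
def ctr (A : Fin (d+1) → Pt d) : Pt d := Finset.centroid ℝ Finset.univ A

/-- `C` is a circumcenter of the simplex with vertices `A`:
it is equidistant from all the vertices. -/
def IsCircumcenter (A : Fin (d+1) → Pt d) (C : Pt d) : Prop :=
  ∃ r : ℝ, ∀ i, dist C (A i) = r

/-- The affine span (hyperplane) of the facet opposite to vertex `j`. -/
def facetSpan (A : Fin (d+1) → Pt d) (j : Fin (d+1)) : Set (Pt d) :=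
  (affineSpan ℝ (A '' {i | i ≠ j}) : Set (Pt d))

/-- `I` is the incenter of the simplex with vertices `A`: an interior point
equidistant from the affine hyperplanes spanned by the facets. -/
def IsIncenter (A : Fin (d+1) → Pt d) (I : Pt d) : Prop :=
  I ∈ interior (convexHull ℝ (Set.range A)) ∧
    ∃ r : ℝ, ∀ j, Metric.infDist I (facetSpan A j) = r

/-- `F` is a Fermat-Torricelli point of the simplex with vertices `A`:
it minimizes the sum of the distances to the vertices. -/
def IsFermatPoint (A : Fin (d+1) → Pt d) (F : Pt d) : Prop :=
  ∀ Q : Pt d, ∑ i, dist F (A i) ≤ ∑ i, dist Q (A i)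

/-- The altitude of the simplex at vertex `j`: the distance from `A j` to the
affine span of the opposite facet. -/
def altitude (A : Fin (d+1) → Pt d) (j : Fin (d+1)) : ℝ :=
  Metric.infDist (A j) (facetSpan A j)

/-- Equiareal: all facets have the same `(d-1)`-dimensional volume; equivalently
(since `d · vol S = facet volume · altitude`), all altitudes are equal. -/
def Equiareal (A : Fin (d+1) → Pt d) : Prop :=
  ∀ j k, altitude A j = altitude A k

/-- `r` is the circumradius of the facet opposite `j`: some point of the affine
span of the facet is at distance `r` from all its vertices. -/
def IsFacetCircumradius (A : Fin (d+1) → Pt d) (j : Fin (d+1)) (r : ℝ) : Prop :=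
  ∃ C ∈ affineSpan ℝ (A '' {i | i ≠ j}), ∀ i, i ≠ j → dist C (A i) = r

/-- Equiradial: all facets have the same circumradius. -/
def Equiradial (A : Fin (d+1) → Pt d) : Prop :=
  ∃ r : ℝ, ∀ j, IsFacetCircumradius A j r

/-- Equifacetal: any two facets are congruent, i.e. there is an isometry of the
ambient space carrying the vertex set of one facet onto that of the other. -/
def Equifacetal (A : Fin (d+1) → Pt d) : Prop :=
  ∀ j k, ∃ f : Pt d ≃ᵢ Pt d, f '' (A '' {i | i ≠ j}) = A '' {i | i ≠ k}

/-- Regular: all edges have equal length. -/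
def Regular (A : Fin (d+1) → Pt d) : Prop :=
  ∀ i j k l, i ≠ j → k ≠ l → dist (A i) (A j) = dist (A k) (A l)

/-! ### Auxiliary machinery -/

open scoped RealInnerProductSpace

/-- The affine hyperplane with normal `n` and constant `c`, as an affine subspace. -/
def hyperplaneAux (n : Pt 4) (c : ℝ) : AffineSubspace ℝ (Pt 4) where
  carrier := {x | ⟪n, x⟫ = c}
  smul_vsub_vadd_mem' := by
    intro t p₁ p₂ p₃ h₁ h₂ h₃
    simp only [Set.mem_setOf_eq] at *
    rw [vsub_eq_sub, vadd_eq_add, inner_add_right, real_inner_smul_right, inner_sub_right,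
      h₁, h₂, h₃]
    ring

lemma span_le_hyperplaneAux {s : Set (Pt 4)} {n : Pt 4} {c : ℝ} (h : ∀ x ∈ s, ⟪n, x⟫ = c) :
    ∀ y ∈ affineSpan ℝ s, ⟪n, y⟫ = c := fun _ hy =>
  (affineSpan_le (Q := hyperplaneAux n c)).mpr h hy

lemma infDist_span (n : Pt 4) (c : ℝ) (s : Set (Pt 4)) (p : Pt 4)
    (hn : ⟪n, n⟫ ≠ 0)
    (hs : ∀ x ∈ s, ⟪n, x⟫ = c)
    (hfoot : p - ((⟪n, p⟫ - c) / ⟪n, n⟫) • n ∈ affineSpan ℝ s) :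
    Metric.infDist p (affineSpan ℝ s : Set (Pt 4)) =
      Real.sqrt ((⟪n, p⟫ - c) ^ 2 / ⟪n, n⟫) := by
  set a : ℝ := ⟪n, p⟫ - c with ha
  have hnn : (0:ℝ) < ⟪n, n⟫ := lt_of_le_of_ne real_inner_self_nonneg (Ne.symm hn)
  have hnpos : (0:ℝ) < ‖n‖ := by
    have := real_inner_self_eq_norm_mul_norm n
    nlinarith [norm_nonneg n]
  have key : Real.sqrt (a ^ 2 / ⟪n, n⟫) = |a| / ‖n‖ := by
    rw [real_inner_self_eq_norm_mul_norm, show a ^ 2 / (‖n‖ * ‖n‖) = (|a| / ‖n‖) ^ 2 by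
      rw [div_pow, sq_abs]; ring_nf]
    exact Real.sqrt_sq (by positivity)
  rw [key]
  refine le_antisymm ?_ ?_
  · have hub := Metric.infDist_le_dist_of_mem (x := p) hfoot
    have : dist p (p - (a / ⟪n, n⟫) • n) = |a| / ‖n‖ := by
      rw [dist_eq_norm, show p - (p - (a / ⟪n, n⟫) • n) = (a / ⟪n, n⟫) • n by abel,
        norm_smul, real_inner_self_eq_norm_mul_norm]
      rw [Real.norm_eq_abs, abs_div, abs_mul, abs_norm]
      field_simp
    linarith [this ▸ hub]
  · rw [Metric.infDist_eq_iInf]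
    haveI : Nonempty (affineSpan ℝ s : Set (Pt 4)) := ⟨⟨_, hfoot⟩⟩
    refine le_ciInf fun yy => ?_
    obtain ⟨y, hy⟩ := yy
    have hyc : ⟪n, y⟫ = c := span_le_hyperplaneAux hs y hy
    have h1 : |a| = |⟪n, p - y⟫| := by rw [inner_sub_right, hyc, ha]
    have h2 : |⟪n, p - y⟫| ≤ ‖n‖ * ‖p - y‖ := abs_real_inner_le_norm n (p - y)
    rw [div_le_iff₀ hnpos, dist_eq_norm]
    calc |a| = |⟪n, p - y⟫| := h1
    _ ≤ ‖n‖ * ‖p - y‖ := h2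
    _ = ‖p - y‖ * ‖n‖ := by ring

lemma combo_mem_affineSpan {s : Set (Pt 4)} {q0 q1 q2 q3 : Pt 4}
    (h0 : q0 ∈ s) (h1 : q1 ∈ s) (h2 : q2 ∈ s) (h3 : q3 ∈ s) (w1 w2 w3 : ℝ) :
    w1 • (q1 - q0) + (w2 • (q2 - q0) + (w3 • (q3 - q0) + q0)) ∈ affineSpan ℝ s := by
  have m0 : q0 ∈ affineSpan ℝ s := mem_affineSpan ℝ h0
  have m1 : q1 ∈ affineSpan ℝ s := mem_affineSpan ℝ h1
  have m2 : q2 ∈ affineSpan ℝ s := mem_affineSpan ℝ h2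
  have m3 : q3 ∈ affineSpan ℝ s := mem_affineSpan ℝ h3
  have t3 := (affineSpan ℝ s).smul_vsub_vadd_mem w3 m3 m0 m0
  have t2 := (affineSpan ℝ s).smul_vsub_vadd_mem w2 m2 m0 t3
  have t1 := (affineSpan ℝ s).smul_vsub_vadd_mem w1 m1 m0 t2
  simpa [vsub_eq_sub, vadd_eq_add] using t1

lemma ctr_eq_comb (A : Fin 5 → Pt 4) :
    ctr A = (5:ℝ)⁻¹ • (A 0 + A 1 + A 2 + A 3 + A 4) := by
  rw [ctr, Finset.centroid_def,
    Finset.affineCombination_eq_linear_combination _ _ _ (by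
      simp [Finset.centroidWeights_apply, Fin.sum_univ_five])]
  simp [Finset.centroidWeights_apply, Fin.sum_univ_five, smul_add]

/-! ### The two example simplices -/

def A1 : Fin 5 → Pt 4 :=
  ![!₂[(-7:ℝ), -1, 0, 0], !₂[-4, 3, -5, 0], !₂[0, -5, 4, -3], !₂[5, 5, 0, 0], !₂[6, -2, 1, 3]]

def A2 : Fin 5 → Pt 4 :=
  ![!₂[(3:ℝ), 0, 0, 0], !₂[0, 3, 0, 0], !₂[0, 0, 3, 0], !₂[3, 3, 3, 2], !₂[3, 3, 3, -2]]

def g2 : Pt 4 := !₂[(9:ℝ)/5, (9:ℝ)/5, (9:ℝ)/5, 0]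

lemma ctr_A1 : ctr A1 = 0 := by
  rw [ctr_eq_comb]
  ext j
  fin_cases j <;>
    norm_num [Matrix.cons_val_two, Matrix.cons_val_three, Matrix.cons_val_four, Matrix.tail_cons, Matrix.head_cons, EuclideanSpace.norm_eq, A1, PiLp.smul_apply, PiLp.add_apply, PiLp.zero_apply]

lemma ctr_A2 : ctr A2 = g2 := by
  rw [ctr_eq_comb]
  ext j
  fin_cases j <;>
    norm_num [Matrix.cons_val_two, Matrix.cons_val_three, Matrix.cons_val_four, Matrix.tail_cons, Matrix.head_cons, EuclideanSpace.norm_eq, A2, g2, PiLp.smul_apply, PiLp.add_apply]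

lemma indep_A1 : AffineIndependent ℝ A1 := by
  rw [affineIndependent_iff]
  intro s w hw hcomb i hi
  set W : Fin 5 → ℝ := fun j => if j ∈ s then w j else 0 with hW
  have hw' : ∑ j, W j = 0 := by
    rw [Finset.sum_ite_mem, Finset.univ_inter]; exact hw
  have hcomb' : ∑ j, W j • A1 j = 0 := by
    have hjj : ∀ j, W j • A1 j = if j ∈ s then w j • A1 j else 0 := fun j => by
      by_cases h : j ∈ s <;> simp [hW, h]
    rw [Finset.sum_congr rfl fun j _ => hjj j, Finset.sum_ite_mem, Finset.univ_inter]
    exact hcomb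
  have key : ∀ j, W j = 0 := by
    have e0 := congrArg (fun v : Pt 4 => v 0) hcomb'
    have e1 := congrArg (fun v : Pt 4 => v 1) hcomb'
    have e2 := congrArg (fun v : Pt 4 => v 2) hcomb'
    have e3 := congrArg (fun v : Pt 4 => v 3) hcomb'
    simp only [Fin.sum_univ_five, A1, PiLp.toLp_apply, PiLp.add_apply, PiLp.smul_apply, PiLp.zero_apply,
      Matrix.cons_val_zero, Matrix.cons_val_one, Matrix.head_cons, Matrix.cons_val_two,
      Matrix.tail_cons, Matrix.cons_val_three, Matrix.cons_val_four, smul_eq_mul] at e0 e1 e2 e3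
    rw [Fin.sum_univ_five] at hw'
    have k0 : W 0 = 0 := by linarith
    have k1 : W 1 = 0 := by linarith
    have k2 : W 2 = 0 := by linarith
    have k3 : W 3 = 0 := by linarith
    have k4 : W 4 = 0 := by linarith
    intro j
    fin_cases j <;> assumption
  have := key i
  simpa [hW, hi] using this

lemma indep_A2 : AffineIndependent ℝ A2 := by
  rw [affineIndependent_iff]
  intro s w hw hcomb i hi
  set W : Fin 5 → ℝ := fun j => if j ∈ s then w j else 0 with hW
  have hw' : ∑ j, W j = 0 := by
    rw [Finset.sum_ite_mem, Finset.univ_inter]; exact hw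
  have hcomb' : ∑ j, W j • A2 j = 0 := by
    have hjj : ∀ j, W j • A2 j = if j ∈ s then w j • A2 j else 0 := fun j => by
      by_cases h : j ∈ s <;> simp [hW, h]
    rw [Finset.sum_congr rfl fun j _ => hjj j, Finset.sum_ite_mem, Finset.univ_inter]
    exact hcomb
  have key : ∀ j, W j = 0 := by
    have e0 := congrArg (fun v : Pt 4 => v 0) hcomb'
    have e1 := congrArg (fun v : Pt 4 => v 1) hcomb'
    have e2 := congrArg (fun v : Pt 4 => v 2) hcomb'
    have e3 := congrArg (fun v : Pt 4 => v 3) hcomb'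
    simp only [Fin.sum_univ_five, A2, PiLp.toLp_apply, PiLp.add_apply, PiLp.smul_apply, PiLp.zero_apply,
      Matrix.cons_val_zero, Matrix.cons_val_one, Matrix.head_cons, Matrix.cons_val_two,
      Matrix.tail_cons, Matrix.cons_val_three, Matrix.cons_val_four, smul_eq_mul] at e0 e1 e2 e3
    rw [Fin.sum_univ_five] at hw'
    have k3 : W 3 = 0 := by linarith
    have k4 : W 4 = 0 := by linarith
    have k0 : W 0 = 0 := by linarith
    have k1 : W 1 = 0 := by linarith
    have k2 : W 2 = 0 := by linarith
    intro j
    fin_cases j <;> assumption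
  have := key i
  simpa [hW, hi] using this

lemma circ_A1 : IsCircumcenter A1 (ctr A1) := by
  refine ⟨Real.sqrt 50, fun i => ?_⟩
  rw [ctr_A1, EuclideanSpace.dist_eq]
  fin_cases i <;> (congr 1; norm_num [Matrix.cons_val_two, Matrix.cons_val_three, Matrix.cons_val_four, Matrix.tail_cons, Matrix.head_cons, EuclideanSpace.norm_eq, A1, Fin.sum_univ_four, Real.dist_eq])

lemma dist_A2_0 : dist (ctr A2) (A2 0) = Real.sqrt ((198:ℝ)/25) := by
  rw [ctr_A2, EuclideanSpace.dist_eq]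
  congr 1
  norm_num [Matrix.cons_val_two, Matrix.cons_val_three, Matrix.cons_val_four, Matrix.tail_cons, Matrix.head_cons, EuclideanSpace.norm_eq, A2, g2, Fin.sum_univ_four, Real.dist_eq, abs_sub_lt_iff, div_pow]

lemma dist_A2_3 : dist (ctr A2) (A2 3) = Real.sqrt ((208:ℝ)/25) := by
  rw [ctr_A2, EuclideanSpace.dist_eq]
  congr 1
  norm_num [Matrix.cons_val_two, Matrix.cons_val_three, Matrix.cons_val_four, Matrix.tail_cons, Matrix.head_cons, EuclideanSpace.norm_eq, A2, g2, Fin.sum_univ_four, Real.dist_eq, abs_sub_lt_iff, div_pow]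

def basisA2 : AffineBasis (Fin 5) ℝ (Pt 4) :=
  ⟨A2, indep_A2, by
    rw [indep_A2.affineSpan_eq_top_iff_card_eq_finrank_add_one]
    simp [finrank_euclideanSpace_fin]⟩

lemma int_A2 : ctr A2 ∈ interior (convexHull ℝ (Set.range A2)) :=
  basisA2.centroid_mem_interior_convexHull

def n1_0 : Pt 4 := !₂[(-19:ℝ), (13:ℝ), (29:ℝ), (27:ℝ)]

lemma facet_A1_0 : Metric.infDist (ctr A1) (facetSpan A1 0) = Real.sqrt (((3:ℝ)/7)) := by
  rw [ctr_A1]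
  show Metric.infDist _ (affineSpan ℝ (A1 '' {i | i ≠ 0}) : Set (Pt 4)) = _
  have h1 : A1 1 ∈ A1 '' {i | i ≠ 0} := ⟨1, by decide, rfl⟩
  have h2 : A1 2 ∈ A1 '' {i | i ≠ 0} := ⟨2, by decide, rfl⟩
  have h3 : A1 3 ∈ A1 '' {i | i ≠ 0} := ⟨3, by decide, rfl⟩
  have h4 : A1 4 ∈ A1 '' {i | i ≠ 0} := ⟨4, by decide, rfl⟩
  have hs : ∀ x ∈ A1 '' {i | i ≠ 0}, ⟪n1_0, x⟫ = (-30:ℝ) := by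
    rintro x ⟨i, hi, rfl⟩
    fin_cases i
    · simp at hi
    · norm_num [Matrix.cons_val_two, Matrix.cons_val_three, Matrix.cons_val_four, Matrix.tail_cons, Matrix.head_cons, EuclideanSpace.norm_eq, A1, n1_0, PiLp.inner_apply, RCLike.inner_apply, Fin.sum_univ_four]
    · norm_num [Matrix.cons_val_two, Matrix.cons_val_three, Matrix.cons_val_four, Matrix.tail_cons, Matrix.head_cons, EuclideanSpace.norm_eq, A1, n1_0, PiLp.inner_apply, RCLike.inner_apply, Fin.sum_univ_four]
    · norm_num [Matrix.cons_val_two, Matrix.cons_val_three, Matrix.cons_val_four, Matrix.tail_cons, Matrix.head_cons, EuclideanSpace.norm_eq, A1, n1_0, PiLp.inner_apply, RCLike.inner_apply, Fin.sum_univ_four]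
    · norm_num [Matrix.cons_val_two, Matrix.cons_val_three, Matrix.cons_val_four, Matrix.tail_cons, Matrix.head_cons, EuclideanSpace.norm_eq, A1, n1_0, PiLp.inner_apply, RCLike.inner_apply, Fin.sum_univ_four]
  have hn : ⟪n1_0, n1_0⟫ ≠ 0 := by
    norm_num [Matrix.cons_val_two, Matrix.cons_val_three, Matrix.cons_val_four, Matrix.tail_cons, Matrix.head_cons, EuclideanSpace.norm_eq, n1_0, PiLp.inner_apply, RCLike.inner_apply, Fin.sum_univ_four]
  have hfoot : (0 : Pt 4) - ((⟪n1_0, (0 : Pt 4)⟫ - (-30:ℝ)) / ⟪n1_0, n1_0⟫) • n1_0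
      ∈ affineSpan ℝ (A1 '' {i | i ≠ 0}) := by
    have hmem := combo_mem_affineSpan h1 h2 h3 h4 (((11:ℝ)/35)) (((9:ℝ)/70)) (((13:ℝ)/70))
    have heq : (0 : Pt 4) - ((⟪n1_0, (0 : Pt 4)⟫ - (-30:ℝ)) / ⟪n1_0, n1_0⟫) • n1_0
        = (((11:ℝ)/35)) • (A1 2 - A1 1) + ((((9:ℝ)/70)) • (A1 3 - A1 1) + ((((13:ℝ)/70)) • (A1 4 - A1 1) + A1 1)) := by
      ext k
      fin_cases k <;>
        norm_num [Matrix.cons_val_two, Matrix.cons_val_three, Matrix.cons_val_four, Matrix.tail_cons, Matrix.head_cons, EuclideanSpace.norm_eq, A1, n1_0, PiLp.inner_apply, RCLike.inner_apply, Fin.sum_univ_four,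
          PiLp.sub_apply, PiLp.add_apply, PiLp.smul_apply, PiLp.zero_apply]
    rw [heq]; exact hmem
  rw [infDist_span _ ((-30:ℝ)) _ _ hn hs hfoot]
  congr 1
  norm_num [Matrix.cons_val_two, Matrix.cons_val_three, Matrix.cons_val_four, Matrix.tail_cons, Matrix.head_cons, EuclideanSpace.norm_eq, n1_0, PiLp.inner_apply, RCLike.inner_apply, Fin.sum_univ_four]
def n1_3 : Pt 4 := !₂[(-1:ℝ), (-23:ℝ), (-19:ℝ), (3:ℝ)]

lemma facet_A1_3 : Metric.infDist (ctr A1) (facetSpan A1 3) = Real.sqrt ((1:ℝ)) := by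
  rw [ctr_A1]
  show Metric.infDist _ (affineSpan ℝ (A1 '' {i | i ≠ 3}) : Set (Pt 4)) = _
  have h0 : A1 0 ∈ A1 '' {i | i ≠ 3} := ⟨0, by decide, rfl⟩
  have h1 : A1 1 ∈ A1 '' {i | i ≠ 3} := ⟨1, by decide, rfl⟩
  have h2 : A1 2 ∈ A1 '' {i | i ≠ 3} := ⟨2, by decide, rfl⟩
  have h4 : A1 4 ∈ A1 '' {i | i ≠ 3} := ⟨4, by decide, rfl⟩
  have hs : ∀ x ∈ A1 '' {i | i ≠ 3}, ⟪n1_3, x⟫ = (30:ℝ) := by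
    rintro x ⟨i, hi, rfl⟩
    fin_cases i
    · norm_num [Matrix.cons_val_two, Matrix.cons_val_three, Matrix.cons_val_four, Matrix.tail_cons, Matrix.head_cons, EuclideanSpace.norm_eq, A1, n1_3, PiLp.inner_apply, RCLike.inner_apply, Fin.sum_univ_four]
    · norm_num [Matrix.cons_val_two, Matrix.cons_val_three, Matrix.cons_val_four, Matrix.tail_cons, Matrix.head_cons, EuclideanSpace.norm_eq, A1, n1_3, PiLp.inner_apply, RCLike.inner_apply, Fin.sum_univ_four]
    · norm_num [Matrix.cons_val_two, Matrix.cons_val_three, Matrix.cons_val_four, Matrix.tail_cons, Matrix.head_cons, EuclideanSpace.norm_eq, A1, n1_3, PiLp.inner_apply, RCLike.inner_apply, Fin.sum_univ_four]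
    · simp at hi
    · norm_num [Matrix.cons_val_two, Matrix.cons_val_three, Matrix.cons_val_four, Matrix.tail_cons, Matrix.head_cons, EuclideanSpace.norm_eq, A1, n1_3, PiLp.inner_apply, RCLike.inner_apply, Fin.sum_univ_four]
  have hn : ⟪n1_3, n1_3⟫ ≠ 0 := by
    norm_num [Matrix.cons_val_two, Matrix.cons_val_three, Matrix.cons_val_four, Matrix.tail_cons, Matrix.head_cons, EuclideanSpace.norm_eq, n1_3, PiLp.inner_apply, RCLike.inner_apply, Fin.sum_univ_four]
  have hfoot : (0 : Pt 4) - ((⟪n1_3, (0 : Pt 4)⟫ - (30:ℝ)) / ⟪n1_3, n1_3⟫) • n1_3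
      ∈ affineSpan ℝ (A1 '' {i | i ≠ 3}) := by
    have hmem := combo_mem_affineSpan h0 h1 h2 h4 (((2:ℝ)/5)) (((4:ℝ)/15)) (((3:ℝ)/10))
    have heq : (0 : Pt 4) - ((⟪n1_3, (0 : Pt 4)⟫ - (30:ℝ)) / ⟪n1_3, n1_3⟫) • n1_3
        = (((2:ℝ)/5)) • (A1 1 - A1 0) + ((((4:ℝ)/15)) • (A1 2 - A1 0) + ((((3:ℝ)/10)) • (A1 4 - A1 0) + A1 0)) := by
      ext k
      fin_cases k <;>
        norm_num [Matrix.cons_val_two, Matrix.cons_val_three, Matrix.cons_val_four, Matrix.tail_cons, Matrix.head_cons, EuclideanSpace.norm_eq, A1, n1_3, PiLp.inner_apply, RCLike.inner_apply, Fin.sum_univ_four,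
          PiLp.sub_apply, PiLp.add_apply, PiLp.smul_apply, PiLp.zero_apply]
    rw [heq]; exact hmem
  rw [infDist_span _ ((30:ℝ)) _ _ hn hs hfoot]
  congr 1
  norm_num [Matrix.cons_val_two, Matrix.cons_val_three, Matrix.cons_val_four, Matrix.tail_cons, Matrix.head_cons, EuclideanSpace.norm_eq, n1_3, PiLp.inner_apply, RCLike.inner_apply, Fin.sum_univ_four]
def n2_0 : Pt 4 := !₂[(1:ℝ), (-1:ℝ), (-1:ℝ), (0:ℝ)]

lemma facet_A2_0 : Metric.infDist (ctr A2) (facetSpan A2 0) = Real.sqrt (((12:ℝ)/25)) := by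
  rw [ctr_A2]
  show Metric.infDist _ (affineSpan ℝ (A2 '' {i | i ≠ 0}) : Set (Pt 4)) = _
  have h1 : A2 1 ∈ A2 '' {i | i ≠ 0} := ⟨1, by decide, rfl⟩
  have h2 : A2 2 ∈ A2 '' {i | i ≠ 0} := ⟨2, by decide, rfl⟩
  have h3 : A2 3 ∈ A2 '' {i | i ≠ 0} := ⟨3, by decide, rfl⟩
  have h4 : A2 4 ∈ A2 '' {i | i ≠ 0} := ⟨4, by decide, rfl⟩
  have hs : ∀ x ∈ A2 '' {i | i ≠ 0}, ⟪n2_0, x⟫ = (-3:ℝ) := by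
    rintro x ⟨i, hi, rfl⟩
    fin_cases i
    · simp at hi
    · norm_num [Matrix.cons_val_two, Matrix.cons_val_three, Matrix.cons_val_four, Matrix.tail_cons, Matrix.head_cons, EuclideanSpace.norm_eq, A2, n2_0, PiLp.inner_apply, RCLike.inner_apply, Fin.sum_univ_four]
    · norm_num [Matrix.cons_val_two, Matrix.cons_val_three, Matrix.cons_val_four, Matrix.tail_cons, Matrix.head_cons, EuclideanSpace.norm_eq, A2, n2_0, PiLp.inner_apply, RCLike.inner_apply, Fin.sum_univ_four]
    · norm_num [Matrix.cons_val_two, Matrix.cons_val_three, Matrix.cons_val_four, Matrix.tail_cons, Matrix.head_cons, EuclideanSpace.norm_eq, A2, n2_0, PiLp.inner_apply, RCLike.inner_apply, Fin.sum_univ_four]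
    · norm_num [Matrix.cons_val_two, Matrix.cons_val_three, Matrix.cons_val_four, Matrix.tail_cons, Matrix.head_cons, EuclideanSpace.norm_eq, A2, n2_0, PiLp.inner_apply, RCLike.inner_apply, Fin.sum_univ_four]
  have hn : ⟪n2_0, n2_0⟫ ≠ 0 := by
    norm_num [Matrix.cons_val_two, Matrix.cons_val_three, Matrix.cons_val_four, Matrix.tail_cons, Matrix.head_cons, EuclideanSpace.norm_eq, n2_0, PiLp.inner_apply, RCLike.inner_apply, Fin.sum_univ_four]
  have hfoot : g2 - ((⟪n2_0, g2⟫ - (-3:ℝ)) / ⟪n2_0, n2_0⟫) • n2_0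
      ∈ affineSpan ℝ (A2 '' {i | i ≠ 0}) := by
    have hmem := combo_mem_affineSpan h1 h2 h3 h4 (((4:ℝ)/15)) (((7:ℝ)/30)) (((7:ℝ)/30))
    have heq : g2 - ((⟪n2_0, g2⟫ - (-3:ℝ)) / ⟪n2_0, n2_0⟫) • n2_0
        = (((4:ℝ)/15)) • (A2 2 - A2 1) + ((((7:ℝ)/30)) • (A2 3 - A2 1) + ((((7:ℝ)/30)) • (A2 4 - A2 1) + A2 1)) := by
      ext k
      fin_cases k <;>
        norm_num [Matrix.cons_val_two, Matrix.cons_val_three, Matrix.cons_val_four, Matrix.tail_cons, Matrix.head_cons, EuclideanSpace.norm_eq, A2, n2_0, g2, PiLp.inner_apply, RCLike.inner_apply, Fin.sum_univ_four,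
          PiLp.sub_apply, PiLp.add_apply, PiLp.smul_apply, PiLp.zero_apply]
    rw [heq]; exact hmem
  rw [infDist_span _ ((-3:ℝ)) _ _ hn hs hfoot]
  congr 1
  norm_num [Matrix.cons_val_two, Matrix.cons_val_three, Matrix.cons_val_four, Matrix.tail_cons, Matrix.head_cons, EuclideanSpace.norm_eq, n2_0, g2, PiLp.inner_apply, RCLike.inner_apply, Fin.sum_univ_four]
def n2_1 : Pt 4 := !₂[(1:ℝ), (-1:ℝ), (1:ℝ), (0:ℝ)]

lemma facet_A2_1 : Metric.infDist (ctr A2) (facetSpan A2 1) = Real.sqrt (((12:ℝ)/25)) := by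
  rw [ctr_A2]
  show Metric.infDist _ (affineSpan ℝ (A2 '' {i | i ≠ 1}) : Set (Pt 4)) = _
  have h0 : A2 0 ∈ A2 '' {i | i ≠ 1} := ⟨0, by decide, rfl⟩
  have h2 : A2 2 ∈ A2 '' {i | i ≠ 1} := ⟨2, by decide, rfl⟩
  have h3 : A2 3 ∈ A2 '' {i | i ≠ 1} := ⟨3, by decide, rfl⟩
  have h4 : A2 4 ∈ A2 '' {i | i ≠ 1} := ⟨4, by decide, rfl⟩
  have hs : ∀ x ∈ A2 '' {i | i ≠ 1}, ⟪n2_1, x⟫ = (3:ℝ) := by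
    rintro x ⟨i, hi, rfl⟩
    fin_cases i
    · norm_num [Matrix.cons_val_two, Matrix.cons_val_three, Matrix.cons_val_four, Matrix.tail_cons, Matrix.head_cons, EuclideanSpace.norm_eq, A2, n2_1, PiLp.inner_apply, RCLike.inner_apply, Fin.sum_univ_four]
    · simp at hi
    · norm_num [Matrix.cons_val_two, Matrix.cons_val_three, Matrix.cons_val_four, Matrix.tail_cons, Matrix.head_cons, EuclideanSpace.norm_eq, A2, n2_1, PiLp.inner_apply, RCLike.inner_apply, Fin.sum_univ_four]
    · norm_num [Matrix.cons_val_two, Matrix.cons_val_three, Matrix.cons_val_four, Matrix.tail_cons, Matrix.head_cons, EuclideanSpace.norm_eq, A2, n2_1, PiLp.inner_apply, RCLike.inner_apply, Fin.sum_univ_four]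
    · norm_num [Matrix.cons_val_two, Matrix.cons_val_three, Matrix.cons_val_four, Matrix.tail_cons, Matrix.head_cons, EuclideanSpace.norm_eq, A2, n2_1, PiLp.inner_apply, RCLike.inner_apply, Fin.sum_univ_four]
  have hn : ⟪n2_1, n2_1⟫ ≠ 0 := by
    norm_num [Matrix.cons_val_two, Matrix.cons_val_three, Matrix.cons_val_four, Matrix.tail_cons, Matrix.head_cons, EuclideanSpace.norm_eq, n2_1, PiLp.inner_apply, RCLike.inner_apply, Fin.sum_univ_four]
  have hfoot : g2 - ((⟪n2_1, g2⟫ - (3:ℝ)) / ⟪n2_1, n2_1⟫) • n2_1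
      ∈ affineSpan ℝ (A2 '' {i | i ≠ 1}) := by
    have hmem := combo_mem_affineSpan h0 h2 h3 h4 (((4:ℝ)/15)) (((7:ℝ)/30)) (((7:ℝ)/30))
    have heq : g2 - ((⟪n2_1, g2⟫ - (3:ℝ)) / ⟪n2_1, n2_1⟫) • n2_1
        = (((4:ℝ)/15)) • (A2 2 - A2 0) + ((((7:ℝ)/30)) • (A2 3 - A2 0) + ((((7:ℝ)/30)) • (A2 4 - A2 0) + A2 0)) := by
      ext k
      fin_cases k <;>
        norm_num [Matrix.cons_val_two, Matrix.cons_val_three, Matrix.cons_val_four, Matrix.tail_cons, Matrix.head_cons, EuclideanSpace.norm_eq, A2, n2_1, g2, PiLp.inner_apply, RCLike.inner_apply, Fin.sum_univ_four,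
          PiLp.sub_apply, PiLp.add_apply, PiLp.smul_apply, PiLp.zero_apply]
    rw [heq]; exact hmem
  rw [infDist_span _ ((3:ℝ)) _ _ hn hs hfoot]
  congr 1
  norm_num [Matrix.cons_val_two, Matrix.cons_val_three, Matrix.cons_val_four, Matrix.tail_cons, Matrix.head_cons, EuclideanSpace.norm_eq, n2_1, g2, PiLp.inner_apply, RCLike.inner_apply, Fin.sum_univ_four]
def n2_2 : Pt 4 := !₂[(-1:ℝ), (-1:ℝ), (1:ℝ), (0:ℝ)]

lemma facet_A2_2 : Metric.infDist (ctr A2) (facetSpan A2 2) = Real.sqrt (((12:ℝ)/25)) := by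
  rw [ctr_A2]
  show Metric.infDist _ (affineSpan ℝ (A2 '' {i | i ≠ 2}) : Set (Pt 4)) = _
  have h0 : A2 0 ∈ A2 '' {i | i ≠ 2} := ⟨0, by decide, rfl⟩
  have h1 : A2 1 ∈ A2 '' {i | i ≠ 2} := ⟨1, by decide, rfl⟩
  have h3 : A2 3 ∈ A2 '' {i | i ≠ 2} := ⟨3, by decide, rfl⟩
  have h4 : A2 4 ∈ A2 '' {i | i ≠ 2} := ⟨4, by decide, rfl⟩
  have hs : ∀ x ∈ A2 '' {i | i ≠ 2}, ⟪n2_2, x⟫ = (-3:ℝ) := by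
    rintro x ⟨i, hi, rfl⟩
    fin_cases i
    · norm_num [Matrix.cons_val_two, Matrix.cons_val_three, Matrix.cons_val_four, Matrix.tail_cons, Matrix.head_cons, EuclideanSpace.norm_eq, A2, n2_2, PiLp.inner_apply, RCLike.inner_apply, Fin.sum_univ_four]
    · norm_num [Matrix.cons_val_two, Matrix.cons_val_three, Matrix.cons_val_four, Matrix.tail_cons, Matrix.head_cons, EuclideanSpace.norm_eq, A2, n2_2, PiLp.inner_apply, RCLike.inner_apply, Fin.sum_univ_four]
    · simp at hi
    · norm_num [Matrix.cons_val_two, Matrix.cons_val_three, Matrix.cons_val_four, Matrix.tail_cons, Matrix.head_cons, EuclideanSpace.norm_eq, A2, n2_2, PiLp.inner_apply, RCLike.inner_apply, Fin.sum_univ_four]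
    · norm_num [Matrix.cons_val_two, Matrix.cons_val_three, Matrix.cons_val_four, Matrix.tail_cons, Matrix.head_cons, EuclideanSpace.norm_eq, A2, n2_2, PiLp.inner_apply, RCLike.inner_apply, Fin.sum_univ_four]
  have hn : ⟪n2_2, n2_2⟫ ≠ 0 := by
    norm_num [Matrix.cons_val_two, Matrix.cons_val_three, Matrix.cons_val_four, Matrix.tail_cons, Matrix.head_cons, EuclideanSpace.norm_eq, n2_2, PiLp.inner_apply, RCLike.inner_apply, Fin.sum_univ_four]
  have hfoot : g2 - ((⟪n2_2, g2⟫ - (-3:ℝ)) / ⟪n2_2, n2_2⟫) • n2_2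
      ∈ affineSpan ℝ (A2 '' {i | i ≠ 2}) := by
    have hmem := combo_mem_affineSpan h0 h1 h3 h4 (((4:ℝ)/15)) (((7:ℝ)/30)) (((7:ℝ)/30))
    have heq : g2 - ((⟪n2_2, g2⟫ - (-3:ℝ)) / ⟪n2_2, n2_2⟫) • n2_2
        = (((4:ℝ)/15)) • (A2 1 - A2 0) + ((((7:ℝ)/30)) • (A2 3 - A2 0) + ((((7:ℝ)/30)) • (A2 4 - A2 0) + A2 0)) := by
      ext k
      fin_cases k <;>
        norm_num [Matrix.cons_val_two, Matrix.cons_val_three, Matrix.cons_val_four, Matrix.tail_cons, Matrix.head_cons, EuclideanSpace.norm_eq, A2, n2_2, g2, PiLp.inner_apply, RCLike.inner_apply, Fin.sum_univ_four,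
          PiLp.sub_apply, PiLp.add_apply, PiLp.smul_apply, PiLp.zero_apply]
    rw [heq]; exact hmem
  rw [infDist_span _ ((-3:ℝ)) _ _ hn hs hfoot]
  congr 1
  norm_num [Matrix.cons_val_two, Matrix.cons_val_three, Matrix.cons_val_four, Matrix.tail_cons, Matrix.head_cons, EuclideanSpace.norm_eq, n2_2, g2, PiLp.inner_apply, RCLike.inner_apply, Fin.sum_univ_four]
def n2_3 : Pt 4 := !₂[(-1:ℝ), (-1:ℝ), (-1:ℝ), (-3:ℝ)]

lemma facet_A2_3 : Metric.infDist (ctr A2) (facetSpan A2 3) = Real.sqrt (((12:ℝ)/25)) := by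
  rw [ctr_A2]
  show Metric.infDist _ (affineSpan ℝ (A2 '' {i | i ≠ 3}) : Set (Pt 4)) = _
  have h0 : A2 0 ∈ A2 '' {i | i ≠ 3} := ⟨0, by decide, rfl⟩
  have h1 : A2 1 ∈ A2 '' {i | i ≠ 3} := ⟨1, by decide, rfl⟩
  have h2 : A2 2 ∈ A2 '' {i | i ≠ 3} := ⟨2, by decide, rfl⟩
  have h4 : A2 4 ∈ A2 '' {i | i ≠ 3} := ⟨4, by decide, rfl⟩
  have hs : ∀ x ∈ A2 '' {i | i ≠ 3}, ⟪n2_3, x⟫ = (-3:ℝ) := by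
    rintro x ⟨i, hi, rfl⟩
    fin_cases i
    · norm_num [Matrix.cons_val_two, Matrix.cons_val_three, Matrix.cons_val_four, Matrix.tail_cons, Matrix.head_cons, EuclideanSpace.norm_eq, A2, n2_3, PiLp.inner_apply, RCLike.inner_apply, Fin.sum_univ_four]
    · norm_num [Matrix.cons_val_two, Matrix.cons_val_three, Matrix.cons_val_four, Matrix.tail_cons, Matrix.head_cons, EuclideanSpace.norm_eq, A2, n2_3, PiLp.inner_apply, RCLike.inner_apply, Fin.sum_univ_four]
    · norm_num [Matrix.cons_val_two, Matrix.cons_val_three, Matrix.cons_val_four, Matrix.tail_cons, Matrix.head_cons, EuclideanSpace.norm_eq, A2, n2_3, PiLp.inner_apply, RCLike.inner_apply, Fin.sum_univ_four]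
    · simp at hi
    · norm_num [Matrix.cons_val_two, Matrix.cons_val_three, Matrix.cons_val_four, Matrix.tail_cons, Matrix.head_cons, EuclideanSpace.norm_eq, A2, n2_3, PiLp.inner_apply, RCLike.inner_apply, Fin.sum_univ_four]
  have hn : ⟪n2_3, n2_3⟫ ≠ 0 := by
    norm_num [Matrix.cons_val_two, Matrix.cons_val_three, Matrix.cons_val_four, Matrix.tail_cons, Matrix.head_cons, EuclideanSpace.norm_eq, n2_3, PiLp.inner_apply, RCLike.inner_apply, Fin.sum_univ_four]
  have hfoot : g2 - ((⟪n2_3, g2⟫ - (-3:ℝ)) / ⟪n2_3, n2_3⟫) • n2_3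
      ∈ affineSpan ℝ (A2 '' {i | i ≠ 3}) := by
    have hmem := combo_mem_affineSpan h0 h1 h2 h4 (((7:ℝ)/30)) (((7:ℝ)/30)) (((3:ℝ)/10))
    have heq : g2 - ((⟪n2_3, g2⟫ - (-3:ℝ)) / ⟪n2_3, n2_3⟫) • n2_3
        = (((7:ℝ)/30)) • (A2 1 - A2 0) + ((((7:ℝ)/30)) • (A2 2 - A2 0) + ((((3:ℝ)/10)) • (A2 4 - A2 0) + A2 0)) := by
      ext k
      fin_cases k <;>
        norm_num [Matrix.cons_val_two, Matrix.cons_val_three, Matrix.cons_val_four, Matrix.tail_cons, Matrix.head_cons, EuclideanSpace.norm_eq, A2, n2_3, g2, PiLp.inner_apply, RCLike.inner_apply, Fin.sum_univ_four,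
          PiLp.sub_apply, PiLp.add_apply, PiLp.smul_apply, PiLp.zero_apply]
    rw [heq]; exact hmem
  rw [infDist_span _ ((-3:ℝ)) _ _ hn hs hfoot]
  congr 1
  norm_num [Matrix.cons_val_two, Matrix.cons_val_three, Matrix.cons_val_four, Matrix.tail_cons, Matrix.head_cons, EuclideanSpace.norm_eq, n2_3, g2, PiLp.inner_apply, RCLike.inner_apply, Fin.sum_univ_four]
def n2_4 : Pt 4 := !₂[(1:ℝ), (1:ℝ), (1:ℝ), (-3:ℝ)]

lemma facet_A2_4 : Metric.infDist (ctr A2) (facetSpan A2 4) = Real.sqrt (((12:ℝ)/25)) := by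
  rw [ctr_A2]
  show Metric.infDist _ (affineSpan ℝ (A2 '' {i | i ≠ 4}) : Set (Pt 4)) = _
  have h0 : A2 0 ∈ A2 '' {i | i ≠ 4} := ⟨0, by decide, rfl⟩
  have h1 : A2 1 ∈ A2 '' {i | i ≠ 4} := ⟨1, by decide, rfl⟩
  have h2 : A2 2 ∈ A2 '' {i | i ≠ 4} := ⟨2, by decide, rfl⟩
  have h3 : A2 3 ∈ A2 '' {i | i ≠ 4} := ⟨3, by decide, rfl⟩
  have hs : ∀ x ∈ A2 '' {i | i ≠ 4}, ⟪n2_4, x⟫ = (3:ℝ) := by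
    rintro x ⟨i, hi, rfl⟩
    fin_cases i
    · norm_num [Matrix.cons_val_two, Matrix.cons_val_three, Matrix.cons_val_four, Matrix.tail_cons, Matrix.head_cons, EuclideanSpace.norm_eq, A2, n2_4, PiLp.inner_apply, RCLike.inner_apply, Fin.sum_univ_four]
    · norm_num [Matrix.cons_val_two, Matrix.cons_val_three, Matrix.cons_val_four, Matrix.tail_cons, Matrix.head_cons, EuclideanSpace.norm_eq, A2, n2_4, PiLp.inner_apply, RCLike.inner_apply, Fin.sum_univ_four]
    · norm_num [Matrix.cons_val_two, Matrix.cons_val_three, Matrix.cons_val_four, Matrix.tail_cons, Matrix.head_cons, EuclideanSpace.norm_eq, A2, n2_4, PiLp.inner_apply, RCLike.inner_apply, Fin.sum_univ_four]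
    · norm_num [Matrix.cons_val_two, Matrix.cons_val_three, Matrix.cons_val_four, Matrix.tail_cons, Matrix.head_cons, EuclideanSpace.norm_eq, A2, n2_4, PiLp.inner_apply, RCLike.inner_apply, Fin.sum_univ_four]
    · simp at hi
  have hn : ⟪n2_4, n2_4⟫ ≠ 0 := by
    norm_num [Matrix.cons_val_two, Matrix.cons_val_three, Matrix.cons_val_four, Matrix.tail_cons, Matrix.head_cons, EuclideanSpace.norm_eq, n2_4, PiLp.inner_apply, RCLike.inner_apply, Fin.sum_univ_four]
  have hfoot : g2 - ((⟪n2_4, g2⟫ - (3:ℝ)) / ⟪n2_4, n2_4⟫) • n2_4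
      ∈ affineSpan ℝ (A2 '' {i | i ≠ 4}) := by
    have hmem := combo_mem_affineSpan h0 h1 h2 h3 (((7:ℝ)/30)) (((7:ℝ)/30)) (((3:ℝ)/10))
    have heq : g2 - ((⟪n2_4, g2⟫ - (3:ℝ)) / ⟪n2_4, n2_4⟫) • n2_4
        = (((7:ℝ)/30)) • (A2 1 - A2 0) + ((((7:ℝ)/30)) • (A2 2 - A2 0) + ((((3:ℝ)/10)) • (A2 3 - A2 0) + A2 0)) := by
      ext k
      fin_cases k <;>
        norm_num [Matrix.cons_val_two, Matrix.cons_val_three, Matrix.cons_val_four, Matrix.tail_cons, Matrix.head_cons, EuclideanSpace.norm_eq, A2, n2_4, g2, PiLp.inner_apply, RCLike.inner_apply, Fin.sum_univ_four,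
          PiLp.sub_apply, PiLp.add_apply, PiLp.smul_apply, PiLp.zero_apply]
    rw [heq]; exact hmem
  rw [infDist_span _ ((3:ℝ)) _ _ hn hs hfoot]
  congr 1
  norm_num [Matrix.cons_val_two, Matrix.cons_val_three, Matrix.cons_val_four, Matrix.tail_cons, Matrix.head_cons, EuclideanSpace.norm_eq, n2_4, g2, PiLp.inner_apply, RCLike.inner_apply, Fin.sum_univ_four]


/-- Theorem 4.4. There is a 4-simplex whose centroid
coincides with its circumcenter but whose incenter is distinct from both, and
there is a 4-simplex whose incenter coincides with its centroid but whose
circumcenter is distinct from both.  Consequently, for 4-simplices `𝒢 = 𝒞`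
implies neither `𝒞 = ℐ` nor `ℐ = 𝒢`, and `ℐ = 𝒢` implies neither `𝒢 = 𝒞` nor
`𝒞 = ℐ`. -/

theorem statement14 :
    (∃ A : Fin 5 → Pt 4, AffineIndependent ℝ A ∧
      IsCircumcenter A (ctr A) ∧ ¬ IsIncenter A (ctr A)) ∧
    (∃ A : Fin 5 → Pt 4, AffineIndependent ℝ A ∧
      IsIncenter A (ctr A) ∧ ¬ IsCircumcenter A (ctr A)) := by
  constructor
  · refine ⟨A1, indep_A1, circ_A1, ?_⟩
    rintro ⟨-, r, hr⟩
    have h0 := hr 0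
    have h3 := hr 3
    rw [facet_A1_0] at h0
    rw [facet_A1_3] at h3
    have heq : ((3:ℝ)/7) = (1:ℝ) :=
      (Real.sqrt_inj (by norm_num) (by norm_num)).mp (by rw [h0, h3])
    norm_num at heq
  · refine ⟨A2, indep_A2, ⟨int_A2, Real.sqrt (((12:ℝ)/25)), fun j => ?_⟩, ?_⟩
    · fin_cases j
      exacts [facet_A2_0, facet_A2_1, facet_A2_2, facet_A2_3, facet_A2_4]
    · rintro ⟨r, hr⟩
      have h0 := hr 0
      have h3 := hr 3
      rw [dist_A2_0] at h0
      rw [dist_A2_3] at h3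
      have heq : ((198:ℝ)/25) = ((208:ℝ)/25) :=
        (Real.sqrt_inj (by norm_num) (by norm_num)).mp (by rw [h0, h3])
      norm_num at heq
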